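/- Let D be a finite digraph whose arcs are each colored blue or red (write u →b v for a blue arc and u →r v for a red arc) such that: (i) if u →b v and v →b w, then u →b w or (w →r u and w →r v); (ii) if u →r v and v →r w, then u →r w or (v →b u and w →b u). If there is a directed path from a vertex u to a vertex v all of whose arcs are blue, then u →b v or v →r u. -/

import Mathlib

private lemma stmt14_aux {V : Type*} (b r : V → V → Prop)
    (hi : ∀ u v w, b u v → b v w → b u w ∨ (r w u ∧ r w v))
    (hii : ∀ u v w, r u v → r v w → r u w ∨ (b v u ∧ b w u)) :
    ∀ (n : ℕ) (m : List V) (v u : V), m.length = n → 2 ≤ m.length →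
      m.Chain' (flip b) → m.head? = some v → m.getLast? = some u →
      b u v ∨ r v u := by
  intro n
  induction n using Nat.strong_induction_on with
  | _ n ih =>
    intro m v u hlen h2 hchain hhead hlast
    rcases m with _ | ⟨v', _ | ⟨w, rest⟩⟩
    · simp at hhead
    · simp at h2
    · have hv : v = v' := by simpa using hhead.symm
      subst hv
      have hbwv : b w v := (List.isChain_cons_cons.mp hchain).1
      have hchain2 : List.Chain' (flip b) (w :: rest) := (List.isChain_cons_cons.mp hchain).2
      rcases rest with _ | ⟨z, rest'⟩
      · have hu : w = u := by simpa using hlast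
        subst hu
        exact Or.inl hbwv
      · have hbzw : b z w := (List.isChain_cons_cons.mp hchain2).1
        have hchain3 : List.Chain' (flip b) (z :: rest') := (List.isChain_cons_cons.mp hchain2).2
        have hlast' : (z :: rest').getLast? = some u := by
          simpa [List.getLast?_cons_cons] using hlast
        have hlenn : n = rest'.length + 3 := by simpa using hlen.symm
        rcases hi z w v hbzw hbwv with hzv | ⟨hrvz, hrvw⟩
        · -- shortcut: v :: z :: rest' is a blue (flip) chain
          exact ih (rest'.length + 2) (by omega) (v :: z :: rest') v u rfl
            (by simp) (List.isChain_cons_cons.mpr ⟨hzv, hchain3⟩) rfl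
            (by simpa [List.getLast?_cons_cons] using hlast')
        · have huw := ih (rest'.length + 2) (by omega) (w :: z :: rest') w u rfl
            (by simp) hchain2 rfl (by simpa [List.getLast?_cons_cons] using hlast')
          rcases huw with huw | hrwu
          · rcases hi u w v huw hbwv with h | ⟨h, _⟩
            · exact Or.inl h
            · exact Or.inr h
          · rcases hii v w u hrvw hrwu with h | ⟨_, h⟩
            · exact Or.inr h
            · exact Or.inl h

theorem stmt14 {V : Type*} [Fintype V] (b r : V → V → Prop)
    (hb_loop : ∀ v, ¬ b v v) (hr_loop : ∀ v, ¬ r v v)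
    (hdisj : ∀ u v, ¬ (b u v ∧ r u v))
    (hi : ∀ u v w, b u v → b v w → b u w ∨ (r w u ∧ r w v))
    (hii : ∀ u v w, r u v → r v w → r u w ∨ (b v u ∧ b w u))
    (u v : V)
    (hpath : ∃ l : List V, l.Nodup ∧ 2 ≤ l.length ∧
      l.head? = some u ∧ l.getLast? = some v ∧ l.Chain' b) :
    b u v ∨ r v u := by
  obtain ⟨l, -, h2, hhead, hlast, hchain⟩ := hpath
  have hchain' : l.reverse.Chain' (flip b) := by
    unfold List.Chain' at hchain ⊢
    rw [List.isChain_reverse]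
    simpa [Function.flip_def] using hchain
  exact stmt14_aux b r hi hii l.reverse.length l.reverse v u rfl
    (by simpa using h2) hchain' (by simpa using hlast) (by simpa using hhead)
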